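/- arXiv:2208.02687 — 3 statements merged into one kernel-verified Lean document; each statement's English description precedes it below -/
import Mathlib

section
/- Let H be a complex Hilbert space and let s, t ∈ B(H) be selfadjoint. Suppose that for every ε > 0 there exist selfadjoint operators a, b ∈ B(H) such that ε·1 + s + a ≥ 0, ε·1 + t − a ≥ 0, ε·1 − s + b ≥ 0, and ε·1 − t − b ≥ 0. Then t = −s. -/
open ContinuousLinearMap

local notation "⟪" x ", " y "⟫_ℂ" => @inner ℂ _ _ x y

theorem stmt_1
    {H : Type*} [NormedAddCommGroup H] [InnerProductSpace ℂ H] [CompleteSpace H]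
    (s t : H →L[ℂ] H) (hs : IsSelfAdjoint s) (ht : IsSelfAdjoint t)
    (h : ∀ ε : ℝ, 0 < ε → ∃ a b : H →L[ℂ] H, IsSelfAdjoint a ∧ IsSelfAdjoint b ∧
      (ε • (1 : H →L[ℂ] H) + s + a).IsPositive ∧
      (ε • (1 : H →L[ℂ] H) + t - a).IsPositive ∧
      (ε • (1 : H →L[ℂ] H) - s + b).IsPositive ∧
      (ε • (1 : H →L[ℂ] H) - t - b).IsPositive) :
    t = -s := by
  set u : H →L[ℂ] H := s + t with hu
  have hu_sa : IsSelfAdjoint u := hs.add ht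
  have hpos : ∀ ε : ℝ, 0 < ε → ((2 * ε) • (1 : H →L[ℂ] H) + u).IsPositive ∧
      ((2 * ε) • (1 : H →L[ℂ] H) - u).IsPositive := by
    intro ε hε
    obtain ⟨a, b, _, _, h1, h2, h3, h4⟩ := h ε hε
    constructor
    · have := h1.add h2
      convert this using 1
      simp [hu, two_mul, add_smul]
      abel
    · have := h3.add h4
      convert this using 1
      simp [hu, two_mul, add_smul]
      abel
  have hre : ∀ x : H, RCLike.re (⟪u x, x⟫_ℂ) = 0 := by
    intro x
    have key : ∀ ε : ℝ, 0 < ε → |RCLike.re (⟪u x, x⟫_ℂ)| ≤ 2 * ε * ‖x‖ ^ 2 := by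
      intro ε hε
      obtain ⟨hp, hm⟩ := hpos ε hε
      have e1 := hp.2 x
      have e2 := hm.2 x
      rw [reApplyInnerSelf] at e1 e2
      simp only [add_apply, sub_apply, smul_apply, one_apply, inner_add_left,
        inner_sub_left, inner_smul_left, map_add, map_sub] at e1 e2
      have hnorm : RCLike.re (⟪((2 * ε : ℝ)) • x, x⟫_ℂ) = 2 * ε * ‖x‖ ^ 2 := by
        rw [RCLike.real_smul_eq_coe_smul (K := ℂ), inner_smul_real_left]
        simp [inner_self_eq_norm_sq]
        left; norm_cast
      rw [show (1 : H →L[ℂ] H) x = x from rfl, hnorm] at e1 e2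
      rw [abs_le]
      constructor <;> linarith
    have h0 : |RCLike.re (⟪u x, x⟫_ℂ)| ≤ 0 := by
      by_contra hc
      push_neg at hc
      rcases eq_or_lt_of_le (norm_nonneg x) with hx | hx
      · have : x = 0 := by simpa using hx.symm
        simp [this] at hc
      · set c := |RCLike.re (⟪u x, x⟫_ℂ)| with hc'
        have hε : 0 < c / (4 * ‖x‖ ^ 2) := by positivity
        have hk := key _ hε
        have heq : 2 * (c / (4 * ‖x‖ ^ 2)) * ‖x‖ ^ 2 = c / 2 := by
          field_simp
          ring
        rw [heq] at hk
        linarith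
    have := abs_nonneg (RCLike.re (⟪u x, x⟫_ℂ))
    have : |RCLike.re (⟪u x, x⟫_ℂ)| = 0 := le_antisymm h0 this
    exact abs_eq_zero.mp this
  have hsym := (isSelfAdjoint_iff_isSymmetric).mp hu_sa
  have hzero : u = 0 := by
    have : (u : H →ₗ[ℂ] H) = 0 := by
      apply hsym.inner_map_self_eq_zero.mp
      intro x
      apply RCLike.ext
      · simpa using hre x
      · rw [ContinuousLinearMap.coe_coe, map_zero, ← hsym.coe_reApplyInnerSelf_apply x,
          RCLike.ofReal_im]
    exact ContinuousLinearMap.coe_injective (this.trans ContinuousLinearMap.coe_zero.symm)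
  have hst : s + t = 0 := hzero
  exact neg_eq_of_add_eq_zero_right hst |>.symm
end

section
/- Let H be a complex Hilbert space, let A ⊆ B(H) be a unital C*-subalgebra, and let φ : B(H) → B(H) be a completely positive map. Then φ(a x b) = a φ(x) b for all a, b ∈ A and x ∈ B(H) if and only if φ(a) = a·φ(1) for every a ∈ A. -/
open Matrix ContinuousLinearMap

/-- A linear map on B(H) is completely positive if, at every matrix level, it maps
positive matrices (those of the form `Nᴴ * N`) to positive matrices. -/
def IsCompletelyPositiveMapCLM {H : Type*} [NormedAddCommGroup H]
    [InnerProductSpace ℂ H] [CompleteSpace H]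
    (φ : (H →L[ℂ] H) →ₗ[ℂ] (H →L[ℂ] H)) : Prop :=
  ∀ (n : ℕ) (M : Matrix (Fin n) (Fin n) (H →L[ℂ] H)),
    (∃ N : Matrix (Fin n) (Fin n) (H →L[ℂ] H), M = Nᴴ * N) →
    ∃ N' : Matrix (Fin n) (Fin n) (H →L[ℂ] H), M.map φ = N'ᴴ * N'

section Aux

variable {H : Type*} [NormedAddCommGroup H] [InnerProductSpace ℂ H] [CompleteSpace H]

private lemma lin_nonneg_zero (a b : ℝ) (h : ∀ t : ℝ, 0 ≤ a * t + b) : a = 0 := by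
  by_contra ha
  have h1 := h ((-b - 1) / a)
  have h2 : a * ((-b - 1) / a) = -b - 1 := by field_simp
  rw [h2] at h1; linarith

private lemma lin_zero (a b : ℝ) (h : ∀ t : ℝ, a * t + b = 0) : a = 0 := by
  have h0 := h 0; have h1 := h 1; linarith

private lemma quad_zero (c d e : ℂ)
    (h : ∀ l : ℂ, ∃ r : ℝ, 0 ≤ r ∧ (starRingEnd ℂ) l * c + l * d + e = r) :
    c = 0 ∧ d = 0 := by
  have him : ∀ l : ℂ, ((starRingEnd ℂ) l * c + l * d + e).im = 0 := fun l => by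
    obtain ⟨r, _, hr⟩ := h l; rw [hr]; simp
  have hre : ∀ l : ℂ, 0 ≤ ((starRingEnd ℂ) l * c + l * d + e).re := fun l => by
    obtain ⟨r, h0, hr⟩ := h l; rw [hr]; simpa using h0
  -- real λ = t
  have h1 : c.im + d.im = 0 := by
    have := lin_zero (c.im + d.im) e.im (fun t => by
      have := him (t : ℂ); simp [Complex.add_im, Complex.mul_im] at this; linarith)
    exact this
  have h2 : c.re + d.re = 0 := by
    refine lin_nonneg_zero (c.re + d.re) e.re (fun t => ?_)
    have := hre (t : ℂ); simp [Complex.add_re, Complex.mul_re] at this; linarith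
  -- λ = i t
  have h3 : d.re - c.re = 0 := by
    have := lin_zero (d.re - c.re) e.im (fun t => by
      have := him ((t : ℂ) * Complex.I)
      simp [Complex.add_im, Complex.mul_im, Complex.mul_re] at this; linarith)
    exact this
  have h4 : c.im - d.im = 0 := by
    refine lin_nonneg_zero (c.im - d.im) e.re (fun t => ?_)
    have := hre ((t : ℂ) * Complex.I)
    simp [Complex.add_re, Complex.mul_re, Complex.mul_im] at this; linarith
  constructor <;> (apply Complex.ext <;> simp <;> linarith)

private lemma key_pos (φ : (H →L[ℂ] H) →ₗ[ℂ] (H →L[ℂ] H))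
    (hcp : IsCompletelyPositiveMapCLM φ)
    (y : Fin 3 → (H →L[ℂ] H)) (ζ : Fin 3 → H) :
    ∃ r : ℝ, 0 ≤ r ∧
      ∑ i, ∑ j, (inner ℂ (ζ i) ((φ (star (y i) * y j)) (ζ j)) : ℂ) = r := by
  set N : Matrix (Fin 3) (Fin 3) (H →L[ℂ] H) := fun k j => if k = 0 then y j else 0 with hN
  obtain ⟨N', hN'⟩ := hcp 3 (Nᴴ * N) ⟨N, rfl⟩
  have hM : ∀ i j, φ (star (y i) * y j) = ∑ k, star (N' k i) * N' k j := by
    intro i j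
    have h1 : (Nᴴ * N) i j = star (y i) * y j := by
      simp only [Matrix.mul_apply, Matrix.conjTranspose_apply]
      simp [hN, Fin.sum_univ_three]
    have h2 := congrFun (congrFun hN' i) j
    simp only [Matrix.map_apply, Matrix.mul_apply, Matrix.conjTranspose_apply, h1] at h2
    exact h2
  refine ⟨∑ k, ‖∑ i, N' k i (ζ i)‖ ^ 2, by positivity, ?_⟩
  have step : ∀ i j, (inner ℂ (ζ i) ((φ (star (y i) * y j)) (ζ j)) : ℂ)
      = ∑ k, (inner ℂ (N' k i (ζ i)) (N' k j (ζ j)) : ℂ) := by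
    intro i j
    rw [hM i j]
    rw [ContinuousLinearMap.sum_apply, inner_sum]
    refine Finset.sum_congr rfl fun k _ => ?_
    rw [ContinuousLinearMap.mul_apply, star_eq_adjoint, adjoint_inner_right]
  calc ∑ i, ∑ j, (inner ℂ (ζ i) ((φ (star (y i) * y j)) (ζ j)) : ℂ)
      = ∑ i, ∑ j, ∑ k, (inner ℂ (N' k i (ζ i)) (N' k j (ζ j)) : ℂ) := by
        exact Finset.sum_congr rfl fun i _ => Finset.sum_congr rfl fun j _ => step i j
    _ = ∑ k, ∑ i, ∑ j, (inner ℂ (N' k i (ζ i)) (N' k j (ζ j)) : ℂ) := by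
        simp only [Fin.sum_univ_three]; ring
    _ = ∑ k, (inner ℂ (∑ i, N' k i (ζ i)) (∑ j, N' k j (ζ j)) : ℂ) := by
        refine Finset.sum_congr rfl fun k _ => ?_
        rw [sum_inner]
        exact Finset.sum_congr rfl fun i _ => by rw [inner_sum]
    _ = ∑ k, ((‖∑ i, N' k i (ζ i)‖ ^ 2 : ℝ) : ℂ) := by
        refine Finset.sum_congr rfl fun k _ => ?_
        rw [inner_self_eq_norm_sq_to_K]; norm_cast
    _ = ((∑ k, ‖∑ i, N' k i (ζ i)‖ ^ 2 : ℝ) : ℂ) := by push_cast; ring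

private lemma star_inner (a : H →L[ℂ] H) (u v : H) :
    (inner ℂ ((star a) u) v : ℂ) = inner ℂ u (a v) := by
  rw [star_eq_adjoint, adjoint_inner_left]

private lemma left_mod (A : StarSubalgebra ℂ (H →L[ℂ] H))
    (φ : (H →L[ℂ] H) →ₗ[ℂ] (H →L[ℂ] H)) (hcp : IsCompletelyPositiveMapCLM φ)
    (h : ∀ a ∈ A, φ a = a * φ 1) :
    ∀ a ∈ A, ∀ x : (H →L[ℂ] H), φ (a * x) = a * φ x := by
  intro a ha x
  have ha' : star a ∈ A := star_mem ha
  have e1 : φ (a * star a) = a * star a * φ 1 := h _ (A.mul_mem ha ha')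
  have e2 : φ a = a * φ 1 := h a ha
  have e3 : φ (star a) = star a * φ 1 := h _ ha'
  ext η
  refine ext_inner_left ℂ fun ξ => ?_
  have key := quad_zero
    ((inner ℂ ξ ((φ (a * x)) η) : ℂ) - (inner ℂ ξ ((a * φ x) η) : ℂ))
    ((inner ℂ η ((φ (star x * star a)) ξ) : ℂ) - (inner ℂ η ((φ (star x) * star a) ξ) : ℂ))
    ((inner ℂ η ((φ (star x * x)) η) : ℂ))
    (fun l => by
      obtain ⟨r, hr, hs⟩ := key_pos φ hcp ![star a, 1, x] ![l • ξ, (-l) • ((star a) ξ), η]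
      refine ⟨r, hr, ?_⟩
      rw [← hs]
      simp only [Fin.sum_univ_three, Matrix.cons_val_zero, Matrix.cons_val_one, Matrix.head_cons,
        Matrix.cons_val_two, Matrix.tail_cons, star_star, star_one, mul_one, one_mul,
        inner_smul_left, inner_smul_right, _root_.map_smul, e1, e2, e3,
        ContinuousLinearMap.mul_apply, star_inner, map_neg, neg_smul, inner_neg_neg,
        inner_neg_left, inner_neg_right, ContinuousLinearMap.smul_apply, ContinuousLinearMap.neg_apply]
      ring_nf)
  have hc := key.1
  have : (inner ℂ ξ ((φ (a * x)) η) : ℂ) = inner ℂ ξ ((a * φ x) η) := by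
    have := sub_eq_zero.mp hc; exact this
  exact this

private lemma star_inner2 (a : H →L[ℂ] H) (u v : H) :
    (inner ℂ u ((star a) v) : ℂ) = inner ℂ (a u) v := by
  rw [star_eq_adjoint, adjoint_inner_right]

private lemma right_mod (A : StarSubalgebra ℂ (H →L[ℂ] H))
    (φ : (H →L[ℂ] H) →ₗ[ℂ] (H →L[ℂ] H)) (hcp : IsCompletelyPositiveMapCLM φ)
    (h : ∀ a ∈ A, φ a = a * φ 1) :
    ∀ b ∈ A, ∀ x : (H →L[ℂ] H), φ (x * b) = φ x * b := by
  intro b hb x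
  have hb' : star b ∈ A := star_mem hb
  have e1 : φ (star b * b) = star b * b * φ 1 := h _ (A.mul_mem hb' hb)
  have e2 : φ b = b * φ 1 := h b hb
  have e3 : φ (star b) = star b * φ 1 := h _ hb'
  ext η
  refine ext_inner_left ℂ fun ξ => ?_
  have key := quad_zero
    ((inner ℂ η ((φ (star b * star x)) ξ) : ℂ) - (inner ℂ (b η) ((φ (star x)) ξ) : ℂ))
    ((inner ℂ ξ ((φ (x * b)) η) : ℂ) - (inner ℂ ξ ((φ x * b) η) : ℂ))
    ((inner ℂ ξ ((φ (x * star x)) ξ) : ℂ))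
    (fun l => by
      obtain ⟨r, hr, hs⟩ := key_pos φ hcp ![star x, b, 1] ![ξ, l • η, (-l) • (b η)]
      refine ⟨r, hr, ?_⟩
      rw [← hs]
      simp only [Fin.sum_univ_three, Matrix.cons_val_zero, Matrix.cons_val_one, Matrix.head_cons,
        Matrix.cons_val_two, Matrix.tail_cons, star_star, star_one, mul_one, one_mul,
        inner_smul_left, inner_smul_right, _root_.map_smul, e1, e2, e3,
        ContinuousLinearMap.mul_apply, star_inner, star_inner2, map_neg, neg_smul, inner_neg_neg,
        inner_neg_left, inner_neg_right, ContinuousLinearMap.smul_apply,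
        ContinuousLinearMap.neg_apply]
      ring_nf)
  exact sub_eq_zero.mp key.2

end Aux

theorem stmt_7
    {H : Type*} [NormedAddCommGroup H] [InnerProductSpace ℂ H] [CompleteSpace H]
    (A : StarSubalgebra ℂ (H →L[ℂ] H)) (hA : IsClosed (A : Set (H →L[ℂ] H)))
    (φ : (H →L[ℂ] H) →ₗ[ℂ] (H →L[ℂ] H)) (hcp : IsCompletelyPositiveMapCLM φ) :
    (∀ a ∈ A, ∀ b ∈ A, ∀ x : H →L[ℂ] H, φ (a * x * b) = a * φ x * b) ↔
      (∀ a ∈ A, φ a = a * φ 1) := by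
  constructor
  · intro hbim a ha
    have := hbim a ha 1 A.one_mem' 1
    simpa using this
  · intro h a ha b hb x
    calc φ (a * x * b) = φ ((a * x) * b) := rfl
      _ = φ (a * x) * b := right_mod A φ hcp h b hb (a * x)
      _ = (a * φ x) * b := by rw [left_mod A φ hcp h a ha x]
      _ = a * φ x * b := by rw [mul_assoc]
end

section
/- Let H be a complex Hilbert space, let A ⊆ B(H) be a subalgebra closed in the weak operator topology, and let s, t ∈ B(H) be selfadjoint. For n ≥ 1 set Xₙ = { a ∈ A : a = a*, (1/n)·1 + s + a ≥ 0 and (1/n)·1 + t − a ≥ 0 }. If every Xₙ is nonempty, then there exists a selfadjoint a₀ ∈ A with s + a₀ ≥ 0 and t − a₀ ≥ 0. -/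
open ContinuousLinearMap Filter Topology ComplexConjugate

theorem stmt_8
    {H : Type*} [NormedAddCommGroup H] [InnerProductSpace ℂ H] [CompleteSpace H]
    (A : Subalgebra ℂ (H →L[ℂ] H))
    (hA : IsClosed ((ContinuousLinearMapWOT.linearEquiv (E := H) (F := H) (σ := RingHom.id ℂ) ℂ).symm '' (A : Set (H →L[ℂ] H))))
    (s t : H →L[ℂ] H) (hs : IsSelfAdjoint s) (ht : IsSelfAdjoint t)
    (hX : ∀ n : ℕ, 1 ≤ n → ∃ a ∈ A, IsSelfAdjoint a ∧
      ((1 / (n : ℝ)) • (1 : H →L[ℂ] H) + s + a).IsPositive ∧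
      ((1 / (n : ℝ)) • (1 : H →L[ℂ] H) + t - a).IsPositive) :
    ∃ a₀ ∈ A, IsSelfAdjoint a₀ ∧ (s + a₀).IsPositive ∧ (t - a₀).IsPositive := by
  classical
  choose a haA hasa hp1 hp2 using fun n : ℕ => hX (n+1) (Nat.le_add_left 1 n)
  set C : ℝ := ‖s‖ + ‖t‖ + 1 with hCdef
  have hC1 : (1:ℝ) ≤ C := by
    have := norm_nonneg s; have := norm_nonneg t; simp only [hCdef]; linarith
  have hC0 : (0:ℝ) ≤ C := by linarith
  -- basic positivity inequalities
  have e1 : ∀ (n : ℕ) (x : H), 0 ≤ 1/((n:ℝ)+1) * ‖x‖^2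
      + Complex.re (inner ℂ (s x) x) + Complex.re (inner ℂ (a n x) x) := by
    intro n x
    have h2 := (hp1 n).2 x
    push_cast at h2
    simp only [reApplyInnerSelf_apply, add_apply, smul_apply, ContinuousLinearMap.one_apply, inner_add_left,
      RCLike.real_smul_eq_coe_smul (K := ℂ), inner_smul_real_left, smul_eq_mul,
      RCLike.re_ofReal_mul, map_add, inner_self_eq_norm_sq, RCLike.re_to_complex] at h2
    exact h2
  have e2 : ∀ (n : ℕ) (x : H), 0 ≤ 1/((n:ℝ)+1) * ‖x‖^2
      + Complex.re (inner ℂ (t x) x) - Complex.re (inner ℂ (a n x) x) := by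
    intro n x
    have h2 := (hp2 n).2 x
    push_cast at h2
    simp only [reApplyInnerSelf_apply, sub_apply, add_apply, smul_apply, ContinuousLinearMap.one_apply,
      inner_add_left, inner_sub_left, RCLike.real_smul_eq_coe_smul (K := ℂ), inner_smul_real_left,
      smul_eq_mul, RCLike.re_ofReal_mul, map_add, map_sub, inner_self_eq_norm_sq,
      RCLike.re_to_complex] at h2
    linarith [h2]
  have hnq : ∀ (T : H →L[ℂ] H) (x : H), |Complex.re (inner ℂ (T x) x : ℂ)| ≤ ‖T‖ * ‖x‖^2 := by
    intro T x
    refine (Complex.abs_re_le_norm _).trans ?_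
    refine (norm_inner_le_norm _ _).trans ?_
    have := T.le_opNorm x
    have h0 := norm_nonneg x
    nlinarith
  -- quadratic bound
  have key : ∀ (n : ℕ) (x : H), ‖(inner ℂ (a n x) x : ℂ)‖ ≤ C * ‖x‖^2 := by
    intro n x
    have hreal : (inner ℂ (a n x) x : ℂ) = ((Complex.re (inner ℂ (a n x) x) : ℝ) : ℂ) := by
      rw [eq_comm, ← Complex.conj_eq_iff_re]
      rw [inner_conj_symm]
      exact ((isSelfAdjoint_iff_isSymmetric.mp (hasa n)) x x).symm
    rw [hreal, Complex.norm_real, Real.norm_eq_abs]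
    have hn : 1/((n:ℝ)+1) ≤ 1 := by
      rw [div_le_one (by positivity)]; linarith [Nat.cast_nonneg (α := ℝ) n]
    have h1 := e1 n x; have h2 := e2 n x
    have hbs := hnq s x; have hbt := hnq t x
    have hx0 : (0:ℝ) ≤ ‖x‖^2 := by positivity
    rw [abs_le] at hbs hbt ⊢
    constructor
    · simp only [hCdef]; nlinarith
    · simp only [hCdef]; nlinarith
  -- bilinear bound via polarization
  have pairbd : ∀ (n : ℕ) (x y : H), ‖(inner ℂ (a n x) y : ℂ)‖ ≤ C * (‖x‖ + ‖y‖)^2 := by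
    intro n x y
    have hpol := inner_map_polarization' ((a n : H →ₗ[ℂ] H)) x y
    simp only [ContinuousLinearMap.coe_coe] at hpol
    have hb : ∀ z : H, ‖z‖ ≤ ‖x‖ + ‖y‖ → ‖(inner ℂ (a n z) z : ℂ)‖ ≤ C * (‖x‖ + ‖y‖)^2 := by
      intro z hz
      exact (key n z).trans
        (mul_le_mul_of_nonneg_left (pow_le_pow_left₀ (norm_nonneg z) hz 2) hC0)
    have h1 := hb (x + y) (norm_add_le x y)
    have h2 := hb (x - y) (norm_sub_le x y)
    have h3 : ‖(inner ℂ (a n (x + Complex.I • y)) (x + Complex.I • y) : ℂ)‖ ≤ C * (‖x‖ + ‖y‖)^2 := by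
      refine hb _ ?_
      refine (norm_add_le x _).trans ?_
      rw [norm_smul, Complex.norm_I, one_mul]
    have h4 : ‖(inner ℂ (a n (x - Complex.I • y)) (x - Complex.I • y) : ℂ)‖ ≤ C * (‖x‖ + ‖y‖)^2 := by
      refine hb _ ?_
      refine (norm_sub_le x _).trans ?_
      rw [norm_smul, Complex.norm_I, one_mul]
    rw [hpol, norm_div]
    have hnum : ‖(inner ℂ (a n (x + y)) (x + y) : ℂ) - inner ℂ (a n (x - y)) (x - y)
        - Complex.I * inner ℂ (a n (x + Complex.I • y)) (x + Complex.I • y)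
        + Complex.I * inner ℂ (a n (x - Complex.I • y)) (x - Complex.I • y)‖
        ≤ 4 * (C * (‖x‖ + ‖y‖)^2) := by
      refine (norm_add_le _ _).trans ?_
      have hA : ‖(inner ℂ (a n (x + y)) (x + y) : ℂ) - inner ℂ (a n (x - y)) (x - y)
          - Complex.I * inner ℂ (a n (x + Complex.I • y)) (x + Complex.I • y)‖
          ≤ 3 * (C * (‖x‖ + ‖y‖)^2) := by
        refine (norm_sub_le _ _).trans ?_
        have hB : ‖(inner ℂ (a n (x + y)) (x + y) : ℂ) - inner ℂ (a n (x - y)) (x - y)‖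
            ≤ 2 * (C * (‖x‖ + ‖y‖)^2) := by
          refine (norm_sub_le _ _).trans ?_
          linarith
        rw [norm_mul, Complex.norm_I, one_mul]
        linarith
      rw [norm_mul, Complex.norm_I, one_mul]
      linarith
    have h4n : ‖(4 : ℂ)‖ = 4 := by norm_num
    rw [h4n, div_le_iff₀ (by norm_num : (0:ℝ) < 4)]
    linarith
  -- ultrafilter limit
  set b : H × H → ℝ := fun p => C * (‖p.1‖ + ‖p.2‖)^2 with hbdef
  set Kset : Set (H × H → ℂ) := Set.univ.pi fun p => Metric.closedBall 0 (b p) with hKdef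
  have hKc : IsCompact Kset := isCompact_univ_pi fun p => isCompact_closedBall 0 (b p)
  set F : ℕ → (H × H → ℂ) := fun n p => inner ℂ (a n p.1) p.2 with hFdef
  have hFK : ∀ n, F n ∈ Kset := by
    intro n
    rw [hKdef, Set.mem_univ_pi]
    intro p
    rw [Metric.mem_closedBall, dist_zero_right]
    exact pairbd n p.1 p.2
  set U : Ultrafilter ℕ := Ultrafilter.of atTop with hUdef
  have hUle : (U : Filter ℕ) ≤ atTop := Ultrafilter.of_le _
  obtain ⟨Bf, hBK, hBlim⟩ := hKc.ultrafilter_le_nhds (U.map F)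
    (by rw [Ultrafilter.coe_map]
        exact le_principal_iff.2 (Filter.mem_map.2 (Filter.univ_mem' (fun n => hFK n))))
  rw [Ultrafilter.coe_map] at hBlim
  have htend : ∀ x y : H, Tendsto (fun n => (inner ℂ (a n x) y : ℂ)) (U : Filter ℕ)
      (𝓝 (Bf (x, y))) := fun x y => tendsto_pi_nhds.1 hBlim (x, y)
  -- algebraic properties of Bf
  have hadd₁ : ∀ (x x' y : H), Bf (x + x', y) = Bf (x, y) + Bf (x', y) := by
    intro x x' y
    refine tendsto_nhds_unique (htend (x + x') y) ?_
    have := (htend x y).add (htend x' y)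
    simpa only [map_add, inner_add_left] using this
  have hsmul₁ : ∀ (c : ℂ) (x y : H), Bf (c • x, y) = conj c * Bf (x, y) := by
    intro c x y
    refine tendsto_nhds_unique (htend (c • x) y) ?_
    have := (htend x y).const_mul (conj c)
    simpa only [map_smul, inner_smul_left] using this
  have hadd₂ : ∀ (x y y' : H), Bf (x, y + y') = Bf (x, y) + Bf (x, y') := by
    intro x y y'
    refine tendsto_nhds_unique (htend x (y + y')) ?_
    have := (htend x y).add (htend x y')
    simpa only [inner_add_right] using this
  have hsmul₂ : ∀ (c : ℂ) (x y : H), Bf (x, c • y) = c * Bf (x, y) := by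
    intro c x y
    refine tendsto_nhds_unique (htend x (c • y)) ?_
    have := (htend x y).const_mul c
    simpa only [inner_smul_right] using this
  have hBpt : ∀ x y : H, ‖Bf (x, y)‖ ≤ C * (‖x‖ + ‖y‖)^2 := by
    intro x y
    have := hBK ⟨x, y⟩ (Set.mem_univ _)
    rwa [Metric.mem_closedBall, dist_zero_right] at this
  have hBy0 : ∀ x : H, Bf (x, 0) = 0 := by
    intro x
    have hz : Tendsto (fun _ : ℕ => (0:ℂ)) (U : Filter ℕ) (𝓝 (Bf (x, 0))) := by
      simpa only [inner_zero_right] using htend x 0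
    exact tendsto_nhds_unique hz tendsto_const_nhds
  have hBx0 : ∀ y : H, Bf (0, y) = 0 := by
    intro y
    have hz : Tendsto (fun _ : ℕ => (0:ℂ)) (U : Filter ℕ) (𝓝 (Bf (0, y))) := by
      simpa only [map_zero, inner_zero_left] using htend 0 y
    exact tendsto_nhds_unique hz tendsto_const_nhds
  have hBbd : ∀ x y : H, ‖Bf (x, y)‖ ≤ 4 * C * ‖x‖ * ‖y‖ := by
    intro x y
    rcases eq_or_ne x 0 with rfl | hx
    · rw [hBx0]; simp
    rcases eq_or_ne y 0 with rfl | hy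
    · rw [hBy0]; simp
    have hxp : (0:ℝ) < ‖x‖ := norm_pos_iff.2 hx
    have hyp : (0:ℝ) < ‖y‖ := norm_pos_iff.2 hy
    set lam : ℝ := ‖x‖ / ‖y‖ with hlam
    have hlp : 0 < lam := by positivity
    have h := hBpt x ((lam : ℂ) • y)
    rw [hsmul₂, norm_mul, Complex.norm_real, Real.norm_eq_abs, abs_of_pos hlp,
      norm_smul, Complex.norm_real, Real.norm_eq_abs, abs_of_pos hlp] at h
    have hl : lam * ‖y‖ = ‖x‖ := by rw [hlam, div_mul_cancel₀ _ hyp.ne']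
    rw [hl] at h
    have heq : C * (‖x‖ + ‖x‖)^2 = lam * (4 * C * ‖x‖ * ‖y‖) := by
      rw [hlam]; field_simp; ring
    rw [heq] at h
    exact le_of_mul_le_mul_left h hlp
  -- build the operator
  set Bsl : H →ₛₗ[starRingEnd ℂ] H →ₗ[ℂ] ℂ :=
    LinearMap.mk₂'ₛₗ (starRingEnd ℂ) (RingHom.id ℂ) (fun x y => Bf (x, y))
      hadd₁ (fun c x y => by simpa using hsmul₁ c x y)
      hadd₂ (fun c x y => by simpa using hsmul₂ c x y) with hBsl
  set Bc : H →L⋆[ℂ] H →L[ℂ] ℂ :=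
    LinearMap.mkContinuous₂ Bsl (4 * C) (fun x y => hBbd x y) with hBc
  set a₀ : H →L[ℂ] H := InnerProductSpace.continuousLinearMapOfBilin Bc with ha₀def
  have ha₀ : ∀ x y : H, (inner ℂ (a₀ x) y : ℂ) = Bf (x, y) := by
    intro x y
    rw [ha₀def, InnerProductSpace.continuousLinearMapOfBilin_apply]
    rfl
  -- WOT convergence to a₀
  have htendwot : Tendsto (fun n => (ContinuousLinearMapWOT.linearEquiv (E := H) (F := H) (σ := RingHom.id ℂ) ℂ).symm (a n)) (U : Filter ℕ)
      (𝓝 ((ContinuousLinearMapWOT.linearEquiv (E := H) (F := H) (σ := RingHom.id ℂ) ℂ).symm a₀)) := by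
    rw [ContinuousLinearMapWOT.tendsto_iff_forall_dual_apply_tendsto]
    intro x y
    set z : H := (InnerProductSpace.toDual ℂ H).symm y with hz
    have hyz : ∀ w, y w = inner ℂ z w := by
      intro w
      rw [hz, ← InnerProductSpace.toDual_apply_apply, LinearIsometryEquiv.apply_symm_apply]
    change Tendsto (fun n => y (a n x)) (U : Filter ℕ) (𝓝 (y (a₀ x)))
    simp only [hyz]
    have h1 : Tendsto (fun n => (starRingEnd ℂ) (inner ℂ (a n x) z)) (U : Filter ℕ)
        (𝓝 ((starRingEnd ℂ) (Bf (x, z)))) :=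
      ((RCLike.continuous_conj (K := ℂ)).tendsto _).comp (htend x z)
    have heq : (fun n => (starRingEnd ℂ) (inner ℂ (a n x) z : ℂ))
        = fun n => (inner ℂ z (a n x) : ℂ) := by
      funext n; rw [inner_conj_symm]
    have heq2 : (starRingEnd ℂ) (Bf (x, z)) = inner ℂ z (a₀ x) := by
      rw [← ha₀ x z, inner_conj_symm]
    rw [heq, heq2] at h1
    exact h1
  -- membership in A
  have hmem : a₀ ∈ A := by
    have hcl : (ContinuousLinearMapWOT.linearEquiv (E := H) (F := H) (σ := RingHom.id ℂ) ℂ).symm a₀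
        ∈ (ContinuousLinearMapWOT.linearEquiv (E := H) (F := H) (σ := RingHom.id ℂ) ℂ).symm '' (A : Set (H →L[ℂ] H)) := by
      rw [← hA.closure_eq]
      exact mem_closure_of_tendsto htendwot
        (Eventually.of_forall fun n => ⟨a n, haA n, rfl⟩)
    obtain ⟨c, hcA, hceq⟩ := hcl
    have : c = a₀ := (ContinuousLinearMapWOT.linearEquiv (E := H) (F := H) (σ := RingHom.id ℂ) ℂ).symm.injective hceq
    rwa [← this]
  -- symmetry of Bf
  have hBsym : ∀ x y : H, Bf (x, y) = conj (Bf (y, x)) := by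
    intro x y
    refine tendsto_nhds_unique (htend x y) ?_
    have h1 : Tendsto (fun n => (starRingEnd ℂ) (inner ℂ (a n y) x)) (U : Filter ℕ)
        (𝓝 ((starRingEnd ℂ) (Bf (y, x)))) :=
      ((RCLike.continuous_conj (K := ℂ)).tendsto _).comp (htend y x)
    have heq : (fun n => (starRingEnd ℂ) (inner ℂ (a n y) x : ℂ))
        = fun n => (inner ℂ (a n x) y : ℂ) := by
      funext n
      rw [inner_conj_symm]
      exact ((isSelfAdjoint_iff_isSymmetric.mp (hasa n)) x y).symm
    rwa [heq] at h1
  have ha₀sa : IsSelfAdjoint a₀ := by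
    rw [isSelfAdjoint_iff_isSymmetric]
    intro x y
    simp only [ContinuousLinearMap.coe_coe]
    rw [ha₀ x y, hBsym x y, ← ha₀ y x, inner_conj_symm]
  -- positivity
  have hlim0 : Tendsto (fun n : ℕ => 1/((n:ℝ)+1)) (U : Filter ℕ) (𝓝 0) :=
    tendsto_one_div_add_atTop_nhds_zero_nat.mono_left hUle
  have hrelim : ∀ x : H, Tendsto (fun n => Complex.re (inner ℂ (a n x) x : ℂ)) (U : Filter ℕ)
      (𝓝 (Complex.re (Bf (x, x)))) :=
    fun x => (Complex.continuous_re.tendsto _).comp (htend x x)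
  have hpos1 : (s + a₀).IsPositive := by
    refine ⟨isSelfAdjoint_iff_isSymmetric.mp (hs.add ha₀sa), fun x => ?_⟩
    have hcomb : Tendsto (fun n : ℕ => 1/((n:ℝ)+1) * ‖x‖^2 + Complex.re (inner ℂ (s x) x)
        + Complex.re (inner ℂ (a n x) x)) (U : Filter ℕ)
        (𝓝 (0 * ‖x‖^2 + Complex.re (inner ℂ (s x) x) + Complex.re (Bf (x, x)))) :=
      (((hlim0.mul_const _).add tendsto_const_nhds).add (hrelim x))
    have h0 : (0:ℝ) ≤ 0 * ‖x‖^2 + Complex.re (inner ℂ (s x) x) + Complex.re (Bf (x, x)) :=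
      ge_of_tendsto' hcomb (fun n => e1 n x)
    have hgoal : (s + a₀).reApplyInnerSelf x
        = Complex.re (inner ℂ (s x) x) + Complex.re (Bf (x, x)) := by
      rw [← ha₀ x x]
      simp [reApplyInnerSelf_apply, add_apply, inner_add_left]
    rw [hgoal]; linarith
  have hpos2 : (t - a₀).IsPositive := by
    refine ⟨isSelfAdjoint_iff_isSymmetric.mp (ht.sub ha₀sa), fun x => ?_⟩
    have hcomb : Tendsto (fun n : ℕ => 1/((n:ℝ)+1) * ‖x‖^2 + Complex.re (inner ℂ (t x) x)
        - Complex.re (inner ℂ (a n x) x)) (U : Filter ℕ)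
        (𝓝 (0 * ‖x‖^2 + Complex.re (inner ℂ (t x) x) - Complex.re (Bf (x, x)))) :=
      (((hlim0.mul_const _).add tendsto_const_nhds).sub (hrelim x))
    have h0 : (0:ℝ) ≤ 0 * ‖x‖^2 + Complex.re (inner ℂ (t x) x) - Complex.re (Bf (x, x)) :=
      ge_of_tendsto' hcomb (fun n => e2 n x)
    have hgoal : (t - a₀).reApplyInnerSelf x
        = Complex.re (inner ℂ (t x) x) - Complex.re (Bf (x, x)) := by
      rw [← ha₀ x x]
      simp [reApplyInnerSelf_apply, sub_apply, inner_sub_left]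
    rw [hgoal]; linarith
  exact ⟨a₀, hmem, ha₀sa, hpos1, hpos2⟩
end
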